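/- Let m ≥ 1 be an integer and p, q real numbers with q ≠ 0. Suppose a, b : I → ℝ are differentiable functions on an open interval I ⊆ ℝ with a(τ) > 0 and b(τ) > 0 for all τ ∈ I, satisfying the ODE system a'(τ) = m q² a(τ)²/b(τ)² and b'(τ) = 2p − q² a(τ)/b(τ). Then the function τ ↦ (2p/((m+1)q²) − a(τ)/b(τ)) · a(τ)^{−(m+1)/m} is constant on I. -/

import Mathlib

/-- first integral of the U(1)-bundle Ricci flow ODE system. -/
theorem stmt_0 (m : ℕ) (hm : 1 ≤ m) (p q : ℝ) (hq : q ≠ 0)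
    (s t : ℝ) (a b : ℝ → ℝ)
    (hapos : ∀ τ ∈ Set.Ioo s t, 0 < a τ)
    (hbpos : ∀ τ ∈ Set.Ioo s t, 0 < b τ)
    (ha : ∀ τ ∈ Set.Ioo s t, HasDerivAt a ((m : ℝ) * q ^ 2 * (a τ) ^ 2 / (b τ) ^ 2) τ)
    (hb : ∀ τ ∈ Set.Ioo s t, HasDerivAt b (2 * p - q ^ 2 * a τ / b τ) τ) :
    ∃ C : ℝ, ∀ τ ∈ Set.Ioo s t,
      (2 * p / (((m : ℝ) + 1) * q ^ 2) - a τ / b τ) * (a τ) ^ (-(((m : ℝ) + 1) / m)) = C := by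
  set c : ℝ := 2 * p / (((m : ℝ) + 1) * q ^ 2) with hc
  set α : ℝ := -(((m : ℝ) + 1) / m) with hα
  set F : ℝ → ℝ := fun τ => (c - a τ / b τ) * (a τ) ^ α with hF
  rcases Set.eq_empty_or_nonempty (Set.Ioo s t) with he | ⟨τ0, hτ0⟩
  · exact ⟨0, fun τ hτ => absurd hτ (he ▸ Set.notMem_empty τ)⟩
  have hm0 : (m : ℝ) ≠ 0 := Nat.cast_ne_zero.2 (by omega)
  have key : ∀ τ ∈ Set.Ioo s t, HasDerivAt F 0 τ := by
    intro τ hτ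
    have hA := hapos τ hτ
    have hB := hbpos τ hτ
    have hA' : a τ ≠ 0 := ne_of_gt hA
    have hB' : b τ ≠ 0 := ne_of_gt hB
    have h1 : HasDerivAt (fun τ => c - a τ / b τ)
        (-((((m : ℝ) * q ^ 2 * (a τ) ^ 2 / (b τ) ^ 2) * b τ -
            a τ * (2 * p - q ^ 2 * a τ / b τ)) / (b τ) ^ 2)) τ :=
      ((ha τ hτ).div (hb τ hτ) hB').const_sub c
    have h2 : HasDerivAt (fun τ => (a τ) ^ α)
        (((m : ℝ) * q ^ 2 * (a τ) ^ 2 / (b τ) ^ 2) * α * (a τ) ^ (α - 1)) τ :=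
      (ha τ hτ).rpow_const (Or.inl hA')
    have h3 := h1.mul h2
    convert h3 using 1
    case e'_4 => rfl
    case e'_5 => rfl
    case e'_8 => rfl
    have hrw : (a τ) ^ (α - 1) = (a τ) ^ α / a τ := by
      rw [Real.rpow_sub hA, Real.rpow_one]
    rw [hrw, hc, hα]
    have hm1 : ((m : ℝ) + 1) ≠ 0 := by positivity
    field_simp
    ring
  have hconv : Convex ℝ (Set.Ioo s t) := convex_Ioo s t
  have hdiff : DifferentiableOn ℝ F (Set.Ioo s t) := fun τ hτ =>
    (key τ hτ).differentiableAt.differentiableWithinAt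
  have hzero : ∀ τ ∈ Set.Ioo s t, fderivWithin ℝ F (Set.Ioo s t) τ = 0 := by
    intro τ hτ
    rw [fderivWithin_of_isOpen isOpen_Ioo hτ, (key τ hτ).hasFDerivAt.fderiv]
    ext
    simp
  exact ⟨F τ0, fun τ hτ => hconv.is_const_of_fderivWithin_eq_zero hdiff hzero hτ hτ0⟩
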